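/- For any continuous functions f : ℝ^n → ℝ^p and g : ℝ^p → ℝ^n with p < n, the image of g ∘ f has empty interior in ℝ^n (equivalently, g ∘ f is not surjective onto any open set). -/
import Mathlib

/-- For continuous `f : ℝⁿ → ℝᵖ` and Lipschitz `g : ℝᵖ → ℝⁿ` with `p < n`, the image of
`g ∘ f` has empty interior in `ℝⁿ` (so `g ∘ f` is not surjective onto any open set). -/
theorem stmt_6 (n p : ℕ) (hpn : p < n)
    (f : (Fin n → ℝ) → (Fin p → ℝ)) (g : (Fin p → ℝ) → (Fin n → ℝ))
    (hf : Continuous f) (K : NNReal) (hg : LipschitzWith K g) :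
    interior (Set.range (g ∘ f)) = ∅ := by
  have hdim : dimH (Set.range (g ∘ f)) < (n : ENNReal) := by
    calc dimH (Set.range (g ∘ f)) ≤ dimH (Set.range g) :=
          dimH_mono (Set.range_comp_subset_range f g)
      _ ≤ dimH (Set.univ : Set (Fin p → ℝ)) := by
          rw [← Set.image_univ]; exact hg.dimH_image_le _
      _ = p := Real.dimH_univ_pi_fin p
      _ < n := by exact_mod_cast hpn
  have hvol : MeasureTheory.volume (Set.range (g ∘ f)) = 0 := by
    have h0 : MeasureTheory.Measure.hausdorffMeasure ((n : NNReal) : ℝ) (Set.range (g ∘ f)) = 0 :=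
      hausdorffMeasure_of_dimH_lt (by simpa using hdim)
    rw [← MeasureTheory.hausdorffMeasure_pi_real (ι := Fin n)]
    simpa using h0
  by_contra h
  obtain ⟨x, hx⟩ := Set.nonempty_iff_ne_empty.2 h
  have hpos : 0 < MeasureTheory.volume (interior (Set.range (g ∘ f))) :=
    isOpen_interior.measure_pos _ ⟨x, hx⟩
  exact hpos.ne' (MeasureTheory.measure_mono_null interior_subset hvol)
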